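/- Let q ≥ 2 be an integer and let f be a probability density function on [0,1) that is lower semi-continuous at Lebesgue-almost every point of [0,1). Then there exists a probability space carrying a random variable Y with values in [0,1) whose law has density f, and a random variable N with values in the non-negative integers, such that T^N(Y) is uniformly distributed on [0,1) and T^N(Y) is independent of the pair (N, ⌊q^N Y⌋) (equivalently, independent of the random-length digit string (Y_1,…,Y_N)), and moreover P(N ≤ n) = q^{−n} Σ_{k=1}^{q^n} inf_{I_{k;n}} f for every n ≥ 0. -/

import Mathlib

open MeasureTheory Set

/-- The base-`q` map `T(x) = q·x − ⌊q·x⌋`. -/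
noncomputable def T (q : ℕ) : ℝ → ℝ := fun x => Int.fract ((q : ℝ) * x)

/-- The interval `I_{k;n} = [(k−1)q^{−n}, k·q^{−n})`. -/
noncomputable def Ikn (q n k : ℕ) : Set ℝ :=
  Set.Ico (((k : ℝ) - 1) / (q : ℝ) ^ n) ((k : ℝ) / (q : ℝ) ^ n)

noncomputable def gfl (q : ℕ) (f : ℝ → ℝ) (n : ℕ) (x : ℝ) : ℝ :=
  sInf (f '' Set.Ico ((⌊(q:ℝ)^n * x⌋ : ℝ) / (q:ℝ)^n) ((⌊(q:ℝ)^n * x⌋ + 1 : ℝ) / (q:ℝ)^n))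

noncomputable def pg (q : ℕ) (f : ℝ → ℝ) : ℕ → ℝ → ℝ
  | 0 => fun _ => 0
  | (n+1) => gfl q f n

noncomputable def NN (q : ℕ) (f : ℝ → ℝ) (p : ℝ × ℝ) : ℕ :=
  sInf {n | p.2 * f p.1 ≤ gfl q f n p.1}

section basics
variable {q : ℕ} {f : ℝ → ℝ}

lemma qnpos (hq : 2 ≤ q) (n : ℕ) : (0:ℝ) < (q:ℝ)^n := by
  have : (0:ℝ) < (q:ℝ) := by exact_mod_cast Nat.lt_of_lt_of_le (by norm_num) hq
  positivity

lemma mem_J (hq : 2 ≤ q) (n : ℕ) (x : ℝ) :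
    x ∈ Set.Ico ((⌊(q:ℝ)^n * x⌋ : ℝ) / (q:ℝ)^n) ((⌊(q:ℝ)^n * x⌋ + 1 : ℝ) / (q:ℝ)^n) := by
  have h := qnpos hq n
  constructor
  · rw [div_le_iff₀ h]; rw [mul_comm]; exact Int.floor_le _
  · rw [lt_div_iff₀ h]; rw [mul_comm]; exact Int.lt_floor_add_one _

lemma bdd_img (hf0 : ∀ x, 0 ≤ f x) (s : Set ℝ) : BddBelow (f '' s) :=
  ⟨0, fun y ⟨x, _, hx⟩ => hx ▸ hf0 x⟩

lemma gfl_nonneg (hq : 2 ≤ q) (hf0 : ∀ x, 0 ≤ f x) (n : ℕ) (x : ℝ) : 0 ≤ gfl q f n x := by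
  refine le_csInf ⟨f x, ⟨x, mem_J hq n x, rfl⟩⟩ ?_
  rintro y ⟨z, _, rfl⟩; exact hf0 z

lemma gfl_le_self (hq : 2 ≤ q) (hf0 : ∀ x, 0 ≤ f x) (n : ℕ) (x : ℝ) : gfl q f n x ≤ f x :=
  csInf_le (bdd_img hf0 _) ⟨x, mem_J hq n x, rfl⟩

-- floor relations between levels
lemma floor_level (hq : 2 ≤ q) (n : ℕ) (x : ℝ) :
    (q:ℤ) * ⌊(q:ℝ)^n * x⌋ ≤ ⌊(q:ℝ)^(n+1) * x⌋ ∧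
    ⌊(q:ℝ)^(n+1) * x⌋ < (q:ℤ) * (⌊(q:ℝ)^n * x⌋ + 1) := by
  have hqr : (0:ℝ) < (q:ℝ) := by exact_mod_cast Nat.lt_of_lt_of_le (by norm_num) hq
  constructor
  · apply Int.le_floor.2
    push_cast
    rw [pow_succ, mul_comm ((q:ℝ)^n) (q:ℝ), mul_assoc]
    exact mul_le_mul_of_nonneg_left (Int.floor_le _) hqr.le
  · apply Int.floor_lt.2
    push_cast
    rw [pow_succ, mul_comm ((q:ℝ)^n) (q:ℝ), mul_assoc]
    exact mul_lt_mul_of_pos_left (Int.lt_floor_add_one _) hqr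

lemma floor_prev_eq (hq : 2 ≤ q) (n : ℕ) {x y : ℝ}
    (h : ⌊(q:ℝ)^(n+1) * x⌋ = ⌊(q:ℝ)^(n+1) * y⌋) : ⌊(q:ℝ)^n * x⌋ = ⌊(q:ℝ)^n * y⌋ := by
  have hx := floor_level hq n x
  have hy := floor_level hq n y
  have hq1 : (1:ℤ) ≤ (q:ℤ) := by exact_mod_cast Nat.one_le_of_lt hq
  nlinarith [hx.1, hx.2, hy.1, hy.2]

lemma J_subset (hq : 2 ≤ q) (n : ℕ) (x : ℝ) :
    Set.Ico ((⌊(q:ℝ)^(n+1) * x⌋ : ℝ) / (q:ℝ)^(n+1)) ((⌊(q:ℝ)^(n+1) * x⌋ + 1 : ℝ) / (q:ℝ)^(n+1)) ⊆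
    Set.Ico ((⌊(q:ℝ)^n * x⌋ : ℝ) / (q:ℝ)^n) ((⌊(q:ℝ)^n * x⌋ + 1 : ℝ) / (q:ℝ)^n) := by
  have h := qnpos hq n
  have h1 := qnpos hq (n+1)
  have hqr : (0:ℝ) < (q:ℝ) := by exact_mod_cast Nat.lt_of_lt_of_le (by norm_num) hq
  have hfl := floor_level hq n x
  apply Ico_subset_Ico
  · rw [div_le_div_iff₀ h h1]
    have : ((q:ℝ) * ⌊(q:ℝ)^n * x⌋) ≤ (⌊(q:ℝ)^(n+1) * x⌋ : ℝ) := by exact_mod_cast hfl.1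
    calc ((⌊(q:ℝ)^n * x⌋:ℝ)) * (q:ℝ)^(n+1) = ((q:ℝ) * ⌊(q:ℝ)^n * x⌋) * (q:ℝ)^n := by ring
    _ ≤ (⌊(q:ℝ)^(n+1) * x⌋ : ℝ) * (q:ℝ)^n := by
        exact mul_le_mul_of_nonneg_right this h.le
  · rw [div_le_div_iff₀ h1 h]
    have : ((⌊(q:ℝ)^(n+1) * x⌋ : ℝ) + 1) ≤ (q:ℝ) * (⌊(q:ℝ)^n * x⌋ + 1) := by
      have := hfl.2
      have : (⌊(q:ℝ)^(n+1) * x⌋ : ℤ) + 1 ≤ (q:ℤ) * (⌊(q:ℝ)^n * x⌋ + 1) := this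
      exact_mod_cast this
    calc ((⌊(q:ℝ)^(n+1) * x⌋:ℝ) + 1) * (q:ℝ)^n ≤ ((q:ℝ) * (⌊(q:ℝ)^n * x⌋ + 1)) * (q:ℝ)^n := by
          exact mul_le_mul_of_nonneg_right this h.le
    _ = (↑⌊(q:ℝ)^n * x⌋ + 1) * (q:ℝ)^(n+1) := by ring

lemma gfl_mono (hq : 2 ≤ q) (hf0 : ∀ x, 0 ≤ f x) {n m : ℕ} (hnm : n ≤ m) (x : ℝ) :
    gfl q f n x ≤ gfl q f m x := by
  induction m with
  | zero => simp_all
  | succ k ih =>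
    rcases Nat.lt_or_ge n (k+1) with h | h
    · have := ih (Nat.lt_succ_iff.mp h)
      refine le_trans this ?_
      exact csInf_le_csInf (bdd_img hf0 _) ⟨f x, x, mem_J hq (k+1) x, rfl⟩
        (Set.image_mono (J_subset hq k x))
    · have : n = k+1 := le_antisymm hnm h
      subst this; rfl

lemma pg_le_gfl (hq : 2 ≤ q) (hf0 : ∀ x, 0 ≤ f x) (n : ℕ) (x : ℝ) : pg q f n x ≤ gfl q f n x := by
  cases n with
  | zero => exact gfl_nonneg hq hf0 0 x
  | succ k => exact gfl_mono hq hf0 (Nat.le_succ k) x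

lemma pg_nonneg (hq : 2 ≤ q) (hf0 : ∀ x, 0 ≤ f x) (n : ℕ) (x : ℝ) : 0 ≤ pg q f n x := by
  cases n with
  | zero => exact le_refl 0
  | succ k => exact gfl_nonneg hq hf0 k x

lemma gfl_const (n : ℕ) {x y : ℝ} (h : ⌊(q:ℝ)^n * x⌋ = ⌊(q:ℝ)^n * y⌋) :
    gfl q f n x = gfl q f n y := by unfold gfl; rw [h]

lemma pg_const (hq : 2 ≤ q) (n : ℕ) {x y : ℝ} (h : ⌊(q:ℝ)^n * x⌋ = ⌊(q:ℝ)^n * y⌋) :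
    pg q f n x = pg q f n y := by
  cases n with
  | zero => rfl
  | succ k => exact gfl_const k (floor_prev_eq hq k h)

end basics

section meas
variable {q : ℕ} {f : ℝ → ℝ}

lemma gfl_meas (n : ℕ) : Measurable (gfl q f n) := by
  have : gfl q f n = (fun j : ℤ =>
      sInf (f '' Set.Ico ((j : ℝ) / (q:ℝ)^n) ((j + 1 : ℝ) / (q:ℝ)^n))) ∘
      (fun x : ℝ => ⌊(q:ℝ)^n * x⌋) := by
    funext x; simp [gfl]
  rw [this]
  exact (measurable_from_top).comp (Int.measurable_floor.comp (measurable_const_mul _))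

lemma Mset_meas (hf : Measurable f) (n : ℕ) :
    MeasurableSet {p : ℝ × ℝ | p.2 * f p.1 ≤ gfl q f n p.1} := by
  apply measurableSet_le
  · exact measurable_snd.mul (hf.comp measurable_fst)
  · exact (gfl_meas n).comp measurable_fst

lemma NN_meas (hf : Measurable f) : Measurable (NN q f) := by
  apply measurable_to_countable'
  intro k
  have hset : NN q f ⁻¹' {k} = ({p : ℝ × ℝ | p.2 * f p.1 ≤ gfl q f k p.1} ∩
      ⋂ m ∈ Finset.range k, {p : ℝ × ℝ | p.2 * f p.1 ≤ gfl q f m p.1}ᶜ) ∪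
      (if k = 0 then ⋂ m : ℕ, {p : ℝ × ℝ | p.2 * f p.1 ≤ gfl q f m p.1}ᶜ else ∅) := by
    ext p
    simp only [mem_preimage, mem_singleton_iff, NN, mem_union, mem_inter_iff, mem_setOf_eq,
      mem_iInter, Finset.mem_range, mem_compl_iff]
    constructor
    · intro h
      rcases eq_empty_or_nonempty {n | p.2 * f p.1 ≤ gfl q f n p.1} with he | hne
      · have hk0 : k = 0 := by rw [← h, he]; exact Nat.sInf_empty
        subst hk0
        right
        rw [if_pos rfl]
        refine mem_iInter.2 fun m hm => ?_
        have : m ∈ ({n | p.2 * f p.1 ≤ gfl q f n p.1} : Set ℕ) := hm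
        rw [he] at this; exact this
      · left
        have hmem := Nat.sInf_mem hne
        rw [h] at hmem
        refine ⟨hmem, fun m hm => Nat.notMem_of_lt_sInf (h ▸ hm)⟩
    · rintro (⟨h1, h2⟩ | h)
      · apply le_antisymm (Nat.sInf_le h1)
        by_contra hc
        push_neg at hc
        have := Nat.sInf_mem (s := {n | p.2 * f p.1 ≤ gfl q f n p.1}) ⟨k, h1⟩
        exact h2 _ hc this
      · split_ifs at h with hk
        · subst hk
          simp only [mem_iInter, mem_compl_iff, mem_setOf_eq] at h
          have : {n | p.2 * f p.1 ≤ gfl q f n p.1} = ∅ := by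
            ext m; simp [h m]
          rw [this]; exact Nat.sInf_empty
        · exact absurd h (notMem_empty p)
  rw [hset]
  apply MeasurableSet.union
  · exact (Mset_meas hf k).inter (MeasurableSet.biInter (Finset.range k).countable_toSet
      (fun m _ => (Mset_meas hf m).compl))
  · split_ifs
    · exact MeasurableSet.iInter (fun m => (Mset_meas hf m).compl)
    · exact MeasurableSet.empty

lemma T_meas (q : ℕ) : Measurable (T q) := measurable_fract.comp (measurable_const_mul _)

lemma T_iter_meas (q n : ℕ) : Measurable ((T q)^[n]) := by
  induction n with
  | zero => exact measurable_id
  | succ k ih => rw [Function.iterate_succ]; exact ih.comp (T_meas q)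

lemma U_meas (hf : Measurable f) : Measurable (fun p : ℝ × ℝ => (T q)^[NN q f p] p.1) := by
  have : (fun p : ℝ × ℝ => (T q)^[NN q f p] p.1) =
      (fun z : ℝ × ℕ => (T q)^[z.2] z.1) ∘ (fun p => (p.1, NN q f p)) := rfl
  rw [this]
  exact (measurable_from_prod_countable_left (fun n => T_iter_meas q n)).comp
    (measurable_fst.prodMk (NN_meas hf))

lemma T_iter_eq (q : ℕ) {x : ℝ} (hx : x ∈ Set.Ico (0:ℝ) 1) (n : ℕ) :
    (T q)^[n] x = Int.fract ((q:ℝ)^n * x) := by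
  induction n with
  | zero => simp [Int.fract_eq_self.2 ⟨hx.1, hx.2⟩]
  | succ k ih =>
    rw [Function.iterate_succ_apply', ih]
    show Int.fract ((q:ℝ) * Int.fract ((q:ℝ)^k * x)) = _
    have h2 : (q:ℝ) * Int.fract ((q:ℝ)^k * x)
        = (q:ℝ)^(k+1) * x - ((q * ⌊(q:ℝ)^k * x⌋ : ℤ) : ℝ) := by
      rw [Int.fract]; push_cast; ring
    rw [h2, Int.fract_sub_intCast]

end meas

section anal
variable {q : ℕ} {f : ℝ → ℝ}

/-- goodness from lower semicontinuity -/
lemma good_of_lsc (hq : 2 ≤ q) (hf0 : ∀ x, 0 ≤ f x) {x : ℝ}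
    (hl : LowerSemicontinuousAt f x) :
    ∀ v ∈ Set.Ico (0:ℝ) 1, ∃ m, v * f x ≤ gfl q f m x := by
  intro v hv
  rcases (hf0 x).eq_or_lt with hfx | hfx
  · exact ⟨0, by rw [← hfx]; simpa using gfl_nonneg hq hf0 0 x⟩
  · have hy : v * f x < f x := by nlinarith [hv.1, hv.2]
    have hev := hl _ hy
    rw [Metric.eventually_nhds_iff] at hev
    obtain ⟨ε, hε, hball⟩ := hev
    obtain ⟨m, hm⟩ : ∃ m : ℕ, ((q:ℝ)⁻¹)^m < ε := by
      apply exists_pow_lt_of_lt_one hε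
      rw [inv_lt_one_iff₀]
      right; exact_mod_cast Nat.lt_of_lt_of_le (by norm_num) hq
    refine ⟨m, le_csInf ⟨f x, ⟨x, mem_J hq m x, rfl⟩⟩ ?_⟩
    rintro w ⟨z, hz, rfl⟩
    have hxJ := mem_J hq m x
    have hd : dist z x < ε := by
      rw [Real.dist_eq, abs_sub_lt_iff]
      have hlen : ((⌊(q:ℝ)^m * x⌋ : ℝ) + 1) / (q:ℝ)^m - (⌊(q:ℝ)^m * x⌋ : ℝ) / (q:ℝ)^m
          = ((q:ℝ)^m)⁻¹ := by field_simp; ring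
      have h2 : ((q:ℝ)⁻¹)^m = ((q:ℝ)^m)⁻¹ := by rw [inv_pow]
      constructor <;> nlinarith [hz.1, hz.2, hxJ.1, hxJ.2, hm, qnpos hq m]
    exact (hball hd).le

/-- the inner (vertical-slice) computation -/
lemma inner_calc (hq : 2 ≤ q) (hf0 : ∀ x, 0 ≤ f x) (n : ℕ) (x : ℝ)
    (hgood : 0 < f x → ∀ v ∈ Set.Ico (0:ℝ) 1, ∃ m, v * f x ≤ gfl q f m x) :
    ENNReal.ofReal (f x) * (volume.restrict (Set.Ico (0:ℝ) 1)) {v | NN q f (x, v) = n}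
      = ENNReal.ofReal (gfl q f n x - pg q f n x) := by
  rcases (hf0 x).eq_or_lt with hfx | hfx
  · rw [← hfx]
    have h1 : gfl q f n x = 0 :=
      le_antisymm (by rw [hfx]; exact gfl_le_self hq hf0 n x) (gfl_nonneg hq hf0 n x)
    have h2 : pg q f n x = 0 :=
      le_antisymm (h1 ▸ pg_le_gfl hq hf0 n x) (pg_nonneg hq hf0 n x)
    simp [h1, h2]
  · set a := pg q f n x / f x with ha_def
    set b := gfl q f n x / f x with hb_def
    have ha0 : 0 ≤ a := div_nonneg (pg_nonneg hq hf0 n x) hfx.le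
    have hb1 : b ≤ 1 := by rw [hb_def, div_le_one hfx]; exact gfl_le_self hq hf0 n x
    have hab : a ≤ b := by
      rw [ha_def, hb_def]; gcongr; exact pg_le_gfl hq hf0 n x
    have hrw : (volume.restrict (Set.Ico (0:ℝ) 1)) {v | NN q f (x, v) = n}
        = ENNReal.ofReal (b - a) := by
      rw [Measure.restrict_apply' measurableSet_Ico]
      cases n with
      | zero =>
        have hset : {v | NN q f (x, v) = 0} ∩ Set.Ico (0:ℝ) 1 = Icc 0 b \ {1} := by
          ext v
          simp only [mem_inter_iff, mem_setOf_eq, mem_Ico, mem_diff, mem_Icc,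
            mem_singleton_iff]
          constructor
          · rintro ⟨hN, h0, h1⟩
            have hSne : {m | v * f x ≤ gfl q f m x}.Nonempty := by
              obtain ⟨m, hm⟩ := hgood hfx v ⟨h0, h1⟩
              exact ⟨m, hm⟩
            have h0S : (0:ℕ) ∈ {m | v * f x ≤ gfl q f m x} := by
              rcases Nat.sInf_eq_zero.1 hN with h | h
              · exact h
              · rw [h] at hSne; exact absurd hSne Set.not_nonempty_empty
            have : v ≤ b := by
              rw [hb_def, le_div_iff₀ hfx]; exact h0S
            exact ⟨⟨h0, this⟩, ne_of_lt h1⟩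
          · rintro ⟨⟨h0, hvb⟩, hne1⟩
            have h1 : v < 1 := lt_of_le_of_ne (le_trans hvb hb1) hne1
            refine ⟨Nat.sInf_eq_zero.2 (Or.inl ?_), h0, h1⟩
            show v * f x ≤ gfl q f 0 x
            rw [hb_def, le_div_iff₀ hfx] at hvb; exact hvb
        rw [hset, measure_diff_null (Real.volume_singleton), Real.volume_Icc]
        have : a = 0 := by rw [ha_def]; show (0:ℝ) / f x = 0; simp
        rw [this]
      | succ k =>
        have hset : {v | NN q f (x, v) = k + 1} ∩ Set.Ico (0:ℝ) 1 = Ioc a b \ {1} := by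
          ext v
          simp only [mem_inter_iff, mem_setOf_eq, mem_Ico, mem_diff, mem_Ioc,
            mem_singleton_iff]
          have hiff : NN q f (x, v) = k + 1 ↔
              (v * f x ≤ gfl q f (k+1) x ∧ ¬ (v * f x ≤ gfl q f k x)) := by
            constructor
            · intro hN
              have hSne : {m | v * f x ≤ gfl q f m x}.Nonempty := by
                by_contra hc
                rw [Set.not_nonempty_iff_eq_empty] at hc
                have : NN q f (x, v) = 0 := by
                  show sInf _ = 0; rw [show {n | (x,v).2 * f (x,v).1 ≤ gfl q f n (x,v).1}
                    = {m | v * f x ≤ gfl q f m x} from rfl, hc]; exact Nat.sInf_empty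
                omega
              have hmem := Nat.sInf_mem hSne
              have : sInf {m | v * f x ≤ gfl q f m x} = k + 1 := hN
              rw [this] at hmem
              refine ⟨hmem, fun hc => Nat.notMem_of_lt_sInf (s := {m | v * f x ≤ gfl q f m x})
                (by rw [this]; omega) hc⟩
            · rintro ⟨h1, h2⟩
              have hle : sInf {m | v * f x ≤ gfl q f m x} ≤ k + 1 := Nat.sInf_le h1
              have hmem := Nat.sInf_mem (⟨k+1, h1⟩ : Set.Nonempty {m | v * f x ≤ gfl q f m x})
              have hgt : ¬ (sInf {m | v * f x ≤ gfl q f m x} ≤ k) := by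
                intro hc
                exact h2 (le_trans hmem (gfl_mono hq hf0 hc x))
              show sInf {m | v * f x ≤ gfl q f m x} = k + 1
              omega
          rw [hiff]
          have e1 : v * f x ≤ gfl q f (k+1) x ↔ v ≤ b := by
            rw [hb_def, le_div_iff₀ hfx]
          have e2 : ¬ (v * f x ≤ gfl q f k x) ↔ a < v := by
            rw [not_le, ha_def]
            show gfl q f k x < v * f x ↔ _
            rw [div_lt_iff₀ hfx]
            exact Iff.rfl
          rw [e1, e2]
          constructor
          · rintro ⟨⟨hvb, hav⟩, h0, h1⟩
            exact ⟨⟨hav, hvb⟩, ne_of_lt h1⟩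
          · rintro ⟨⟨hav, hvb⟩, hne1⟩
            have h1 : v < 1 := lt_of_le_of_ne (le_trans hvb hb1) hne1
            exact ⟨⟨hvb, hav⟩, le_of_lt (lt_of_le_of_lt ha0 hav), h1⟩
        rw [hset, measure_diff_null (Real.volume_singleton), Real.volume_Ioc]
    rw [hrw, ← ENNReal.ofReal_mul (hf0 x)]
    congr 1
    rw [ha_def, hb_def]
    field_simp

end anal

section core
variable {q : ℕ} {f : ℝ → ℝ}

lemma core_calc (hq : 2 ≤ q) (hf_meas : Measurable f) (hf0 : ∀ x, 0 ≤ f x)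
    (hgood_ae : ∀ᵐ x ∂(volume : Measure ℝ),
      0 < f x → ∀ v ∈ Set.Ico (0:ℝ) 1, ∃ m, v * f x ≤ gfl q f m x)
    (n : ℕ) (j : ℤ) (hj0 : 0 ≤ j) (hjq : j < (q:ℤ)^n) (B : Set ℝ) (hB : MeasurableSet B) :
    ((volume.withDensity fun x => ENNReal.ofReal (f x)).prod
        (volume.restrict (Set.Ico (0:ℝ) 1)))
      {p : ℝ × ℝ | NN q f p = n ∧ ⌊(q:ℝ)^n * p.1⌋ = j ∧ Int.fract ((q:ℝ)^n * p.1) ∈ B}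
    = ENNReal.ofReal (gfl q f n ((j:ℝ)/(q:ℝ)^n) - pg q f n ((j:ℝ)/(q:ℝ)^n))
      * (ENNReal.ofReal (((q:ℝ)^n)⁻¹) * volume (Set.Ico (0:ℝ) 1 ∩ B)) := by
  have hqn := qnpos hq n
  set x₀ : ℝ := (j:ℝ)/(q:ℝ)^n with hx0
  set c : ℝ := gfl q f n x₀ - pg q f n x₀ with hc
  set A : Set (ℝ × ℝ) :=
    {p : ℝ × ℝ | NN q f p = n ∧ ⌊(q:ℝ)^n * p.1⌋ = j ∧ Int.fract ((q:ℝ)^n * p.1) ∈ B} with hA_def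
  have hfloor_x0 : ⌊(q:ℝ)^n * x₀⌋ = j := by
    rw [hx0, mul_div_cancel₀ _ (ne_of_gt hqn)]
    exact Int.floor_intCast j
  have hA : MeasurableSet A := by
    have h1 : MeasurableSet {p : ℝ × ℝ | NN q f p = n} :=
      NN_meas hf_meas (measurableSet_singleton n)
    have h2 : MeasurableSet {p : ℝ × ℝ | ⌊(q:ℝ)^n * p.1⌋ = j} :=
      (Int.measurable_floor.comp ((measurable_const_mul _).comp measurable_fst))
        (measurableSet_singleton j)
    have h3 : MeasurableSet {p : ℝ × ℝ | Int.fract ((q:ℝ)^n * p.1) ∈ B} :=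
      (measurable_fract.comp ((measurable_const_mul _).comp measurable_fst)) hB
    exact h1.inter (h2.inter h3)
  set Φs : Set ℝ := (fun x : ℝ => (q:ℝ)^n * x - (j:ℝ)) ⁻¹' (Set.Ico (0:ℝ) 1 ∩ B) with hΦs_def
  have hΦs : MeasurableSet Φs :=
    ((measurable_const_mul _).sub measurable_const) (measurableSet_Ico.inter hB)
  rw [Measure.prod_apply hA,
    lintegral_withDensity_eq_lintegral_mul volume hf_meas.ennreal_ofReal
      (measurable_measure_prodMk_left hA)]
  have hae : ∀ᵐ x ∂(volume : Measure ℝ),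
      ((fun x => ENNReal.ofReal (f x)) *
        fun x => (volume.restrict (Set.Ico (0:ℝ) 1)) (Prod.mk x ⁻¹' A)) x
      = Set.indicator Φs (fun _ => ENNReal.ofReal c) x := by
    filter_upwards [hgood_ae] with x hgx
    simp only [Pi.mul_apply]
    by_cases hx : ⌊(q:ℝ)^n * x⌋ = j ∧ Int.fract ((q:ℝ)^n * x) ∈ B
    · have hsec : Prod.mk x ⁻¹' A = {v | NN q f (x, v) = n} := by
        ext v
        simp only [hA_def, mem_preimage, mem_setOf_eq, hx.1, hx.2, and_true]
      have hmem : x ∈ Φs := by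
        have hfr : Int.fract ((q:ℝ)^n * x) = (q:ℝ)^n * x - (j:ℝ) := by
          rw [Int.fract]; rw [hx.1]
        show (q:ℝ)^n * x - (j:ℝ) ∈ Set.Ico (0:ℝ) 1 ∩ B
        rw [← hfr]
        exact ⟨⟨Int.fract_nonneg _, Int.fract_lt_one _⟩, hx.2⟩
      rw [hsec, inner_calc hq hf0 n x hgx, Set.indicator_of_mem hmem]
      have hfl : ⌊(q:ℝ)^n * x⌋ = ⌊(q:ℝ)^n * x₀⌋ := by rw [hx.1, hfloor_x0]
      rw [hc, gfl_const n hfl, pg_const hq n hfl]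
    · have hsec : Prod.mk x ⁻¹' A = ∅ := by
        ext v
        simp only [hA_def, mem_preimage, mem_setOf_eq, mem_empty_iff_false, iff_false]
        intro hcon
        exact hx ⟨hcon.2.1, hcon.2.2⟩
      have hnmem : x ∉ Φs := by
        intro hcon
        obtain ⟨⟨hge, hlt⟩, hBmem⟩ := hcon
        simp only at hge hlt hBmem
        have hfl : ⌊(q:ℝ)^n * x⌋ = j := by
          rw [Int.floor_eq_iff]
          constructor
          · linarith
          · push_cast; linarith
        apply hx
        refine ⟨hfl, ?_⟩
        have : Int.fract ((q:ℝ)^n * x) = (q:ℝ)^n * x - (j:ℝ) := by rw [Int.fract, hfl]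
        rw [this]; exact hBmem
      rw [hsec, Set.indicator_of_notMem hnmem]
      simp
  rw [lintegral_congr_ae hae, lintegral_indicator hΦs, setLIntegral_const]
  have hvol : volume Φs = ENNReal.ofReal (((q:ℝ)^n)⁻¹) * volume (Set.Ico (0:ℝ) 1 ∩ B) := by
    have hfun : (fun x : ℝ => (q:ℝ)^n * x - (j:ℝ))
        = (fun y : ℝ => -(j:ℝ) + y) ∘ (fun x : ℝ => (q:ℝ)^n * x) := by
      funext x; simp only [Function.comp_apply]; ring
    have hcomp : Φs = (fun x : ℝ => (q:ℝ)^n * x) ⁻¹'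
        ((fun y : ℝ => -(j:ℝ) + y) ⁻¹' (Set.Ico (0:ℝ) 1 ∩ B)) := by
      rw [hΦs_def, hfun, Set.preimage_comp]
    rw [hcomp, ← Measure.map_apply (measurable_const_mul _)
        ((measurable_const_add _) (measurableSet_Ico.inter hB)),
      Real.map_volume_mul_left (ne_of_gt hqn)]
    rw [Measure.smul_apply, measure_preimage_add]
    rw [abs_of_pos (inv_pos.2 hqn)]
    rfl
  rw [hvol]
end core

section lawN
variable {q : ℕ} {f : ℝ → ℝ}

/-- slice computation for the event `{v f(x) ≤ g_n(x)}` : pointwise, no a.e. needed -/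
lemma inner2 (hq : 2 ≤ q) (hf0 : ∀ x, 0 ≤ f x) (n : ℕ) (x : ℝ) :
    ENNReal.ofReal (f x) * (volume.restrict (Set.Ico (0:ℝ) 1)) {v | v * f x ≤ gfl q f n x}
      = ENNReal.ofReal (gfl q f n x) := by
  rcases (hf0 x).eq_or_lt with hfx | hfx
  · have h1 : gfl q f n x = 0 :=
      le_antisymm (by rw [hfx]; exact gfl_le_self hq hf0 n x) (gfl_nonneg hq hf0 n x)
    rw [← hfx, h1]
    simp
  · set b := gfl q f n x / f x with hb_def
    have hb0 : 0 ≤ b := div_nonneg (gfl_nonneg hq hf0 n x) hfx.le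
    have hb1 : b ≤ 1 := by rw [hb_def, div_le_one hfx]; exact gfl_le_self hq hf0 n x
    have hset : {v : ℝ | v * f x ≤ gfl q f n x} ∩ Set.Ico (0:ℝ) 1 = Icc 0 b \ {1} := by
      ext v
      simp only [mem_inter_iff, mem_setOf_eq, mem_Ico, mem_diff, mem_Icc, mem_singleton_iff]
      constructor
      · rintro ⟨hv, h0, h1⟩
        exact ⟨⟨h0, by rw [hb_def, le_div_iff₀ hfx]; exact hv⟩, ne_of_lt h1⟩
      · rintro ⟨⟨h0, hvb⟩, hne⟩
        refine ⟨by rw [hb_def, le_div_iff₀ hfx] at hvb; exact hvb, h0,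
          lt_of_le_of_ne (le_trans hvb hb1) hne⟩
    rw [Measure.restrict_apply' measurableSet_Ico, hset,
      measure_diff_null Real.volume_singleton, Real.volume_Icc,
      ← ENNReal.ofReal_mul (hf0 x)]
    congr 1
    rw [hb_def]
    field_simp
    ring

lemma floor_mem_range (hq : 2 ≤ q) (n : ℕ) {x : ℝ} (hx : x ∈ Set.Ico (0:ℝ) 1) :
    0 ≤ ⌊(q:ℝ)^n * x⌋ ∧ ⌊(q:ℝ)^n * x⌋ < (q:ℤ)^n := by
  have hqn := qnpos hq n
  constructor
  · exact Int.le_floor.2 (by push_cast; exact mul_nonneg hqn.le hx.1)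
  · apply Int.floor_lt.2
    push_cast
    nlinarith [hx.2]

lemma Ico_eq_biUnion_Ikn (hq : 2 ≤ q) (n : ℕ) :
    Set.Ico (0:ℝ) 1 = ⋃ k ∈ Finset.Icc 1 (q^n), Ikn q n k := by
  have hqn := qnpos hq n
  ext x
  simp only [mem_iUnion, Finset.mem_Icc, exists_prop, Ikn, mem_Ico]
  constructor
  · intro hx
    obtain ⟨hfl0, hflq⟩ := floor_mem_range hq n hx
    have hcast : (((⌊(q:ℝ)^n * x⌋).toNat : ℕ) : ℝ) = ((⌊(q:ℝ)^n * x⌋ : ℤ) : ℝ) := by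
      exact_mod_cast congrArg (Int.cast : ℤ → ℝ) (Int.toNat_of_nonneg hfl0)
    refine ⟨(⌊(q:ℝ)^n * x⌋).toNat + 1, ⟨by omega, ?_⟩, ?_, ?_⟩
    · have h2 : ((q:ℤ)^n) = ((q^n : ℕ) : ℤ) := by push_cast; ring
      omega
    · push_cast
      rw [hcast]
      rw [show (⌊(q:ℝ)^n * x⌋ : ℝ) + 1 - 1 = (⌊(q:ℝ)^n * x⌋ : ℝ) by ring]
      rw [div_le_iff₀ hqn, mul_comm]
      exact Int.floor_le _
    · push_cast
      rw [hcast, lt_div_iff₀ hqn, mul_comm]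
      exact Int.lt_floor_add_one _
  · rintro ⟨k, ⟨hk1, hkq⟩, hlo, hhi⟩
    have hk1R : (1:ℝ) ≤ (k:ℝ) := by exact_mod_cast hk1
    have hkqR : (k:ℝ) ≤ (q:ℝ)^n := by
      have : (k:ℝ) ≤ ((q^n : ℕ) : ℝ) := by exact_mod_cast hkq
      push_cast at this
      exact this
    constructor
    · refine le_trans (div_nonneg (by linarith) hqn.le) hlo
    · refine lt_of_lt_of_le hhi ?_
      rw [div_le_one hqn]
      exact hkqR

end lawN
section lawN2
variable {q : ℕ} {f : ℝ → ℝ}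

lemma floor_on_Ikn (hq : 2 ≤ q) {n k : ℕ} (hk1 : 1 ≤ k) {x : ℝ} (hx : x ∈ Ikn q n k) :
    ⌊(q:ℝ)^n * x⌋ = (k:ℤ) - 1 := by
  have hqn := qnpos hq n
  obtain ⟨hlo, hhi⟩ := hx
  rw [Int.floor_eq_iff]
  constructor
  · push_cast
    rw [div_le_iff₀ hqn] at hlo
    linarith [hlo]
  · push_cast
    rw [lt_div_iff₀ hqn] at hhi
    linarith [hhi]

lemma gfl_on_Ikn (hq : 2 ≤ q) {n k : ℕ} (hk1 : 1 ≤ k) {x : ℝ} (hx : x ∈ Ikn q n k) :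
    gfl q f n x = sInf (f '' Ikn q n k) := by
  unfold gfl
  rw [floor_on_Ikn hq hk1 hx]
  congr 2
  unfold Ikn
  push_cast
  congr 1 <;> ring_nf

lemma Ikn_disj (hq : 2 ≤ q) (n : ℕ) :
    Set.PairwiseDisjoint (↑(Finset.Icc 1 (q^n)) : Set ℕ) (Ikn q n) := by
  intro k _ k' _ hne
  have hqn := qnpos hq n
  have key : ∀ a b : ℕ, a < b → Disjoint (Ikn q n a) (Ikn q n b) := by
    intro a b hab
    apply Set.disjoint_left.2
    rintro x ⟨_, hxa⟩ ⟨hxb, _⟩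
    have h1 : (a:ℝ) ≤ (b:ℝ) - 1 := by
      have : a + 1 ≤ b := hab
      have : (a:ℝ) + 1 ≤ (b:ℝ) := by exact_mod_cast this
      linarith
    have := lt_of_lt_of_le hxa (by gcongr : (a:ℝ)/(q:ℝ)^n ≤ ((b:ℝ)-1)/(q:ℝ)^n)
    exact absurd hxb (not_le.2 this)
  rcases Nat.lt_or_ge k k' with h | h
  · exact key k k' h
  · exact (key k' k (lt_of_le_of_ne h (Ne.symm hne))).symm

lemma volume_Ikn (hq : 2 ≤ q) (n k : ℕ) :
    volume (Ikn q n k) = ENNReal.ofReal (((q:ℝ)^n)⁻¹) := by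
  have hqn := qnpos hq n
  rw [Ikn, Real.volume_Ico]
  congr 1
  field_simp
  ring

/-- the measure of the event `{(x,v) : v f(x) ≤ g_n(x)}` -/
lemma measure_Mset (hq : 2 ≤ q) (hf_meas : Measurable f) (hf0 : ∀ x, 0 ≤ f x)
    (hf_supp : ∀ x, x ∉ Set.Ico (0:ℝ) 1 → f x = 0) (n : ℕ) :
    ((volume.withDensity fun x => ENNReal.ofReal (f x)).prod
        (volume.restrict (Set.Ico (0:ℝ) 1)))
      {p : ℝ × ℝ | p.2 * f p.1 ≤ gfl q f n p.1}
    = ∑ k ∈ Finset.Icc 1 (q^n),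
        ENNReal.ofReal (sInf (f '' Ikn q n k)) * ENNReal.ofReal (((q:ℝ)^n)⁻¹) := by
  have hA := Mset_meas (q := q) hf_meas n
  rw [Measure.prod_apply hA,
    lintegral_withDensity_eq_lintegral_mul volume hf_meas.ennreal_ofReal
      (measurable_measure_prodMk_left hA)]
  have hpt : ∀ x : ℝ, ((fun x => ENNReal.ofReal (f x)) *
      fun x => (volume.restrict (Set.Ico (0:ℝ) 1))
        (Prod.mk x ⁻¹' {p : ℝ × ℝ | p.2 * f p.1 ≤ gfl q f n p.1})) x
      = ENNReal.ofReal (gfl q f n x) := by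
    intro x
    simp only [Pi.mul_apply]
    have : Prod.mk x ⁻¹' {p : ℝ × ℝ | p.2 * f p.1 ≤ gfl q f n p.1}
        = {v | v * f x ≤ gfl q f n x} := rfl
    rw [this, inner2 hq hf0 n x]
  rw [lintegral_congr hpt]
  have hzero : (fun x => ENNReal.ofReal (gfl q f n x))
      = Set.indicator (Set.Ico (0:ℝ) 1) (fun x => ENNReal.ofReal (gfl q f n x)) := by
    funext x
    by_cases hx : x ∈ Set.Ico (0:ℝ) 1
    · rw [Set.indicator_of_mem hx]
    · rw [Set.indicator_of_notMem hx]
      have h1 : gfl q f n x = 0 := le_antisymm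
        (by rw [← hf_supp x hx]; exact gfl_le_self hq hf0 n x) (gfl_nonneg hq hf0 n x)
      rw [h1]; simp
  rw [hzero, lintegral_indicator measurableSet_Ico, Ico_eq_biUnion_Ikn hq n,
    lintegral_biUnion_finset (Ikn_disj hq n) (fun k _ => measurableSet_Ico)]
  apply Finset.sum_congr rfl
  intro k hk
  have hk1 : 1 ≤ k := (Finset.mem_Icc.1 hk).1
  have hconst : ∀ x ∈ Ikn q n k,
      ENNReal.ofReal (gfl q f n x) = ENNReal.ofReal (sInf (f '' Ikn q n k)) := by
    intro x hx
    rw [gfl_on_Ikn hq hk1 hx]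
  rw [setLIntegral_congr_fun (show MeasurableSet (Ikn q n k) from measurableSet_Ico)
      hconst,
    setLIntegral_const, volume_Ikn hq n k]

end lawN2
section master
variable {q : ℕ} {f : ℝ → ℝ}

lemma mu1_I01c (hf_supp : ∀ x, x ∉ Set.Ico (0:ℝ) 1 → f x = 0) :
    (volume.withDensity fun x => ENNReal.ofReal (f x)) (Set.Ico (0:ℝ) 1)ᶜ = 0 := by
  rw [withDensity_apply _ measurableSet_Ico.compl]
  calc ∫⁻ x in (Set.Ico (0:ℝ) 1)ᶜ, ENNReal.ofReal (f x)
      = ∫⁻ _ in (Set.Ico (0:ℝ) 1)ᶜ, 0 := by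
        apply setLIntegral_congr_fun measurableSet_Ico.compl
        intro x hx
        show ENNReal.ofReal (f x) = 0
        rw [hf_supp x hx]
        simp
    _ = 0 := by simp

lemma fst_null {s : Set ℝ}
    (hs : (volume.withDensity fun x => ENNReal.ofReal (f x)) s = 0) :
    ((volume.withDensity fun x => ENNReal.ofReal (f x)).prod
        (volume.restrict (Set.Ico (0:ℝ) 1))) {p : ℝ × ℝ | p.1 ∈ s} = 0 := by
  set μ1 := volume.withDensity fun x => ENNReal.ofReal (f x)
  have h1 : {p : ℝ × ℝ | p.1 ∈ s} ⊆ (toMeasurable μ1 s) ×ˢ (univ : Set ℝ) :=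
    fun p hp => ⟨subset_toMeasurable μ1 s hp, mem_univ _⟩
  apply measure_mono_null h1
  rw [Measure.prod_prod, measure_toMeasurable, hs, zero_mul]

lemma snd_null :
    ((volume.withDensity fun x => ENNReal.ofReal (f x)).prod
        (volume.restrict (Set.Ico (0:ℝ) 1))) {p : ℝ × ℝ | p.2 ∉ Set.Ico (0:ℝ) 1} = 0 := by
  have h1 : {p : ℝ × ℝ | p.2 ∉ Set.Ico (0:ℝ) 1}
      = (univ : Set ℝ) ×ˢ (Set.Ico (0:ℝ) 1)ᶜ := by
    ext p; simp [Set.mem_prod]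
  rw [h1, Measure.prod_prod]
  have h2 : (volume.restrict (Set.Ico (0:ℝ) 1)) (Set.Ico (0:ℝ) 1)ᶜ = 0 := by
    rw [Measure.restrict_apply' measurableSet_Ico, compl_inter_self]
    simp
  rw [h2, mul_zero]

lemma Z_null (hq : 2 ≤ q) (hf0 : ∀ x, 0 ≤ f x)
    (hgood_ae : ∀ᵐ x ∂(volume : Measure ℝ),
      0 < f x → ∀ v ∈ Set.Ico (0:ℝ) 1, ∃ m, v * f x ≤ gfl q f m x) :
    ((volume.withDensity fun x => ENNReal.ofReal (f x)).prod
        (volume.restrict (Set.Ico (0:ℝ) 1)))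
      {p : ℝ × ℝ | ∀ m, ¬ p.2 * f p.1 ≤ gfl q f m p.1} = 0 := by
  set E : Set ℝ := {x | ¬ (0 < f x → ∀ v ∈ Set.Ico (0:ℝ) 1, ∃ m, v * f x ≤ gfl q f m x)}
    with hE_def
  have hE : volume E = 0 := by
    rw [← ae_iff] at *
    exact hgood_ae
  have hE1 : (volume.withDensity fun x => ENNReal.ofReal (f x)) E = 0 :=
    withDensity_absolutelyContinuous volume _ hE
  have hsub : {p : ℝ × ℝ | ∀ m, ¬ p.2 * f p.1 ≤ gfl q f m p.1}
      ⊆ {p : ℝ × ℝ | p.1 ∈ E} ∪ {p : ℝ × ℝ | p.2 ∉ Set.Ico (0:ℝ) 1} := by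
    intro p hp
    by_cases h1 : p.1 ∈ E
    · exact Or.inl h1
    · right
      intro h2
      rw [hE_def, mem_setOf_eq, not_not] at h1
      rcases (hf0 p.1).eq_or_lt with hfz | hfz
      · exact hp 0 (by rw [← hfz, mul_zero]; exact gfl_nonneg hq hf0 0 p.1)
      · obtain ⟨m, hm⟩ := h1 hfz p.2 h2
        exact hp m hm
  apply measure_mono_null hsub
  exact measure_union_null (fst_null hE1) snd_null

lemma prob_N_le (hq : 2 ≤ q) (hf0 : ∀ x, 0 ≤ f x)
    (hgood_ae : ∀ᵐ x ∂(volume : Measure ℝ),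
      0 < f x → ∀ v ∈ Set.Ico (0:ℝ) 1, ∃ m, v * f x ≤ gfl q f m x) (n : ℕ) :
    ((volume.withDensity fun x => ENNReal.ofReal (f x)).prod
        (volume.restrict (Set.Ico (0:ℝ) 1))) {p : ℝ × ℝ | NN q f p ≤ n}
    = ((volume.withDensity fun x => ENNReal.ofReal (f x)).prod
        (volume.restrict (Set.Ico (0:ℝ) 1))) {p : ℝ × ℝ | p.2 * f p.1 ≤ gfl q f n p.1} := by
  set ℙ := (volume.withDensity fun x => ENNReal.ofReal (f x)).prod
    (volume.restrict (Set.Ico (0:ℝ) 1))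
  apply le_antisymm
  · have hsub : {p : ℝ × ℝ | NN q f p ≤ n} ⊆ {p : ℝ × ℝ | p.2 * f p.1 ≤ gfl q f n p.1}
        ∪ {p : ℝ × ℝ | ∀ m, ¬ p.2 * f p.1 ≤ gfl q f m p.1} := by
      intro p hp
      by_cases hne : ∃ m, p.2 * f p.1 ≤ gfl q f m p.1
      · left
        have hnemp : {m | p.2 * f p.1 ≤ gfl q f m p.1}.Nonempty := hne
        have hmem := Nat.sInf_mem hnemp
        exact le_trans hmem (gfl_mono hq hf0 hp p.1)
      · right
        push_neg at hne
        exact fun m => not_le.2 (hne m)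
    calc ℙ {p : ℝ × ℝ | NN q f p ≤ n}
        ≤ ℙ ({p : ℝ × ℝ | p.2 * f p.1 ≤ gfl q f n p.1}
            ∪ {p : ℝ × ℝ | ∀ m, ¬ p.2 * f p.1 ≤ gfl q f m p.1}) := measure_mono hsub
      _ ≤ ℙ {p : ℝ × ℝ | p.2 * f p.1 ≤ gfl q f n p.1}
            + ℙ {p : ℝ × ℝ | ∀ m, ¬ p.2 * f p.1 ≤ gfl q f m p.1} := measure_union_le _ _
      _ = ℙ {p : ℝ × ℝ | p.2 * f p.1 ≤ gfl q f n p.1} := by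
          rw [Z_null hq hf0 hgood_ae, add_zero]
  · apply measure_mono
    intro p hp
    exact Nat.sInf_le hp

/-- the atoms of the pair `(N, digits)` -/
def Pev (q : ℕ) (f : ℝ → ℝ) (n : ℕ) (j : ℤ) : Set (ℝ × ℝ) :=
  {p | NN q f p = n ∧ ⌊(q:ℝ)^n * p.1⌋ = j}

def Aev (q : ℕ) (f : ℝ → ℝ) (n : ℕ) (j : ℤ) (B : Set ℝ) : Set (ℝ × ℝ) :=
  {p | NN q f p = n ∧ ⌊(q:ℝ)^n * p.1⌋ = j ∧ Int.fract ((q:ℝ)^n * p.1) ∈ B}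

lemma Aev_meas (hf_meas : Measurable f) (n : ℕ) (j : ℤ) {B : Set ℝ}
    (hB : MeasurableSet B) : MeasurableSet (Aev q f n j B) := by
  have h1 : MeasurableSet {p : ℝ × ℝ | NN q f p = n} :=
    NN_meas hf_meas (measurableSet_singleton n)
  have h2 : MeasurableSet {p : ℝ × ℝ | ⌊(q:ℝ)^n * p.1⌋ = j} :=
    (Int.measurable_floor.comp ((measurable_const_mul _).comp measurable_fst))
      (measurableSet_singleton j)
  have h3 : MeasurableSet {p : ℝ × ℝ | Int.fract ((q:ℝ)^n * p.1) ∈ B} :=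
    (measurable_fract.comp ((measurable_const_mul _).comp measurable_fst)) hB
  exact h1.inter (h2.inter h3)

lemma Pev_eq_Aev_univ (n : ℕ) (j : ℤ) : Pev q f n j = Aev q f n j univ := by
  ext p; simp [Pev, Aev]

lemma Pev_meas (hf_meas : Measurable f) (n : ℕ) (j : ℤ) : MeasurableSet (Pev q f n j) := by
  rw [Pev_eq_Aev_univ]; exact Aev_meas hf_meas n j MeasurableSet.univ

lemma Aev_subset_Pev (n : ℕ) (j : ℤ) (B : Set ℝ) : Aev q f n j B ⊆ Pev q f n j :=
  fun p hp => ⟨hp.1, hp.2.1⟩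

lemma Pev_disj : Pairwise (Function.onFun Disjoint fun z : ℕ × ℤ => Pev q f z.1 z.2) := by
  intro z z' hne
  apply Set.disjoint_left.2
  rintro p ⟨h1, h2⟩ ⟨h1', h2'⟩
  apply hne
  have hn : z.1 = z'.1 := by rw [← h1, ← h1']
  ext
  · exact hn
  · rw [← h2, ← h2', hn]

lemma Pev_cover : ⋃ z : ℕ × ℤ, Pev q f z.1 z.2 = univ := by
  ext p
  simp only [mem_iUnion, mem_univ, iff_true]
  exact ⟨(NN q f p, ⌊(q:ℝ)^(NN q f p) * p.1⌋), rfl, rfl⟩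

lemma master (hq : 2 ≤ q) (hf_meas : Measurable f) (hf0 : ∀ x, 0 ≤ f x)
    (hf_supp : ∀ x, x ∉ Set.Ico (0:ℝ) 1 → f x = 0)
    (hgood_ae : ∀ᵐ x ∂(volume : Measure ℝ),
      0 < f x → ∀ v ∈ Set.Ico (0:ℝ) 1, ∃ m, v * f x ≤ gfl q f m x)
    (n : ℕ) (j : ℤ) {B : Set ℝ} (hB : MeasurableSet B) :
    ((volume.withDensity fun x => ENNReal.ofReal (f x)).prod
        (volume.restrict (Set.Ico (0:ℝ) 1))) (Aev q f n j B)
    = volume (B ∩ Set.Ico (0:ℝ) 1) *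
      ((volume.withDensity fun x => ENNReal.ofReal (f x)).prod
        (volume.restrict (Set.Ico (0:ℝ) 1))) (Pev q f n j) := by
  by_cases hj : 0 ≤ j ∧ j < (q:ℤ)^n
  · have h1 := core_calc hq hf_meas hf0 hgood_ae n j hj.1 hj.2 B hB
    have h2 := core_calc hq hf_meas hf0 hgood_ae n j hj.1 hj.2 univ MeasurableSet.univ
    have e1 : ((volume.withDensity fun x => ENNReal.ofReal (f x)).prod
        (volume.restrict (Set.Ico (0:ℝ) 1))) (Aev q f n j B)
        = ENNReal.ofReal (gfl q f n ((j:ℝ)/(q:ℝ)^n) - pg q f n ((j:ℝ)/(q:ℝ)^n))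
          * (ENNReal.ofReal (((q:ℝ)^n)⁻¹) * volume (Set.Ico (0:ℝ) 1 ∩ B)) := h1
    have e2 : ((volume.withDensity fun x => ENNReal.ofReal (f x)).prod
        (volume.restrict (Set.Ico (0:ℝ) 1))) (Pev q f n j)
        = ENNReal.ofReal (gfl q f n ((j:ℝ)/(q:ℝ)^n) - pg q f n ((j:ℝ)/(q:ℝ)^n))
          * ENNReal.ofReal (((q:ℝ)^n)⁻¹) := by
      rw [Pev_eq_Aev_univ]
      rw [show ((volume.withDensity fun x => ENNReal.ofReal (f x)).prod
        (volume.restrict (Set.Ico (0:ℝ) 1))) (Aev q f n j univ)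
        = ENNReal.ofReal (gfl q f n ((j:ℝ)/(q:ℝ)^n) - pg q f n ((j:ℝ)/(q:ℝ)^n))
          * (ENNReal.ofReal (((q:ℝ)^n)⁻¹) * volume (Set.Ico (0:ℝ) 1 ∩ univ)) from h2]
      rw [inter_univ, Real.volume_Ico]
      norm_num
    rw [e1, e2, inter_comm]
    ring
  · have hP0 : ((volume.withDensity fun x => ENNReal.ofReal (f x)).prod
        (volume.restrict (Set.Ico (0:ℝ) 1))) (Pev q f n j) = 0 := by
      have hsub : Pev q f n j ⊆ {p : ℝ × ℝ | p.1 ∈ (Set.Ico (0:ℝ) 1)ᶜ} := by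
        rintro p ⟨_, h2⟩
        intro hcon
        have := floor_mem_range hq n hcon
        rw [h2] at this
        exact hj this
      exact measure_mono_null hsub (fst_null (mu1_I01c hf_supp))
    rw [hP0, mul_zero]
    exact measure_mono_null (Aev_subset_Pev n j B) hP0

end master
section final
variable {q : ℕ} {f : ℝ → ℝ}

lemma mu1_univ (hf_meas : Measurable f) (hf0 : ∀ x, 0 ≤ f x)
    (hf_supp : ∀ x, x ∉ Set.Ico (0:ℝ) 1 → f x = 0)
    (hf_pdf : ∫ x in Set.Ico (0:ℝ) 1, f x = 1) :
    (volume.withDensity fun x => ENNReal.ofReal (f x)) univ = 1 := by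
  rw [withDensity_apply _ MeasurableSet.univ, Measure.restrict_univ]
  have hzero : (fun x => ENNReal.ofReal (f x))
      = Set.indicator (Set.Ico (0:ℝ) 1) (fun x => ENNReal.ofReal (f x)) := by
    funext x
    by_cases hx : x ∈ Set.Ico (0:ℝ) 1
    · rw [Set.indicator_of_mem hx]
    · rw [Set.indicator_of_notMem hx, hf_supp x hx]; simp
  rw [hzero, lintegral_indicator measurableSet_Ico]
  have hint : IntegrableOn f (Set.Ico (0:ℝ) 1) volume := by
    by_contra hc
    rw [integral_undef hc] at hf_pdf
    norm_num at hf_pdf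
  rw [← ofReal_integral_eq_lintegral_ofReal hint
    (Filter.Eventually.of_forall fun x => hf0 x), hf_pdf, ENNReal.ofReal_one]

lemma total_one (hf_meas : Measurable f) (hf0 : ∀ x, 0 ≤ f x)
    (hf_supp : ∀ x, x ∉ Set.Ico (0:ℝ) 1 → f x = 0)
    (hf_pdf : ∫ x in Set.Ico (0:ℝ) 1, f x = 1) :
    ((volume.withDensity fun x => ENNReal.ofReal (f x)).prod
        (volume.restrict (Set.Ico (0:ℝ) 1))) univ = 1 := by
  rw [← Set.univ_prod_univ, Measure.prod_prod, mu1_univ hf_meas hf0 hf_supp hf_pdf,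
    Measure.restrict_apply_univ, Real.volume_Ico, one_mul]
  norm_num

lemma lawU (hq : 2 ≤ q) (hf_meas : Measurable f) (hf0 : ∀ x, 0 ≤ f x)
    (hf_supp : ∀ x, x ∉ Set.Ico (0:ℝ) 1 → f x = 0)
    (hf_pdf : ∫ x in Set.Ico (0:ℝ) 1, f x = 1)
    (hgood_ae : ∀ᵐ x ∂(volume : Measure ℝ),
      0 < f x → ∀ v ∈ Set.Ico (0:ℝ) 1, ∃ m, v * f x ≤ gfl q f m x)
    {B : Set ℝ} (hB : MeasurableSet B) :
    ((volume.withDensity fun x => ENNReal.ofReal (f x)).prod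
        (volume.restrict (Set.Ico (0:ℝ) 1)))
      {p : ℝ × ℝ | Int.fract ((q:ℝ)^(NN q f p) * p.1) ∈ B}
    = volume (B ∩ Set.Ico (0:ℝ) 1) := by
  set ℙ := (volume.withDensity fun x => ENNReal.ofReal (f x)).prod
    (volume.restrict (Set.Ico (0:ℝ) 1)) with hP_def
  have hcover : {p : ℝ × ℝ | Int.fract ((q:ℝ)^(NN q f p) * p.1) ∈ B}
      = ⋃ z : ℕ × ℤ, Aev q f z.1 z.2 B := by
    ext p
    simp only [mem_setOf_eq, mem_iUnion]
    constructor
    · intro h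
      exact ⟨(NN q f p, ⌊(q:ℝ)^(NN q f p) * p.1⌋), rfl, rfl, h⟩
    · rintro ⟨z, h1, _, h3⟩
      show Int.fract ((q:ℝ)^(NN q f p) * p.1) ∈ B
      rw [h1]
      exact h3
  have hdisjA : Pairwise (Function.onFun Disjoint fun z : ℕ × ℤ => Aev q f z.1 z.2 B) := by
    intro z z' hne
    exact Disjoint.mono (Aev_subset_Pev _ _ _) (Aev_subset_Pev _ _ _) (Pev_disj hne)
  rw [hcover, measure_iUnion hdisjA (fun z => Aev_meas hf_meas z.1 z.2 hB)]
  have hsum : ∀ z : ℕ × ℤ, ℙ (Aev q f z.1 z.2 B)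
      = volume (B ∩ Set.Ico (0:ℝ) 1) * ℙ (Pev q f z.1 z.2) :=
    fun z => master hq hf_meas hf0 hf_supp hgood_ae z.1 z.2 hB
  rw [tsum_congr hsum, ENNReal.tsum_mul_left]
  have hPsum : ∑' z : ℕ × ℤ, ℙ (Pev q f z.1 z.2) = 1 := by
    rw [← measure_iUnion Pev_disj (fun z => Pev_meas hf_meas z.1 z.2), Pev_cover]
    exact total_one hf_meas hf0 hf_supp hf_pdf
  rw [hPsum, mul_one]

lemma U'_meas (hf_meas : Measurable f) :
    Measurable (fun p : ℝ × ℝ => Int.fract ((q:ℝ)^(NN q f p) * p.1)) := by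
  have h1 : Measurable (fun z : ℝ × ℕ => Int.fract ((q:ℝ)^z.2 * z.1)) := by
    apply measurable_from_prod_countable_left
    intro n
    show Measurable fun x : ℝ => Int.fract ((q:ℝ)^n * x)
    exact measurable_fract.comp (measurable_const_mul _)
  exact h1.comp (measurable_fst.prodMk (NN_meas hf_meas))

lemma indep_main (hq : 2 ≤ q) (hf_meas : Measurable f) (hf0 : ∀ x, 0 ≤ f x)
    (hf_supp : ∀ x, x ∉ Set.Ico (0:ℝ) 1 → f x = 0)
    (hf_pdf : ∫ x in Set.Ico (0:ℝ) 1, f x = 1)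
    (hgood_ae : ∀ᵐ x ∂(volume : Measure ℝ),
      0 < f x → ∀ v ∈ Set.Ico (0:ℝ) 1, ∃ m, v * f x ≤ gfl q f m x) :
    ProbabilityTheory.IndepFun (fun p : ℝ × ℝ => Int.fract ((q:ℝ)^(NN q f p) * p.1))
      (fun p : ℝ × ℝ => (NN q f p, ⌊(q:ℝ)^(NN q f p) * p.1⌋))
      ((volume.withDensity fun x => ENNReal.ofReal (f x)).prod
        (volume.restrict (Set.Ico (0:ℝ) 1))) := by
  set ℙ := (volume.withDensity fun x => ENNReal.ofReal (f x)).prod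
    (volume.restrict (Set.Ico (0:ℝ) 1)) with hP_def
  set U' := fun p : ℝ × ℝ => Int.fract ((q:ℝ)^(NN q f p) * p.1) with hU_def
  set W := fun p : ℝ × ℝ => (NN q f p, ⌊(q:ℝ)^(NN q f p) * p.1⌋) with hW_def
  rw [ProbabilityTheory.indepFun_iff_measure_inter_preimage_eq_mul]
  intro s t hs _
  have hWt : W ⁻¹' t = ⋃ z : ↥t, Pev q f (z : ℕ × ℤ).1 (z : ℕ × ℤ).2 := by
    ext p
    simp only [mem_preimage, mem_iUnion]
    constructor
    · intro h
      exact ⟨⟨W p, h⟩, rfl, rfl⟩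
    · rintro ⟨z, h1, h2⟩
      have hWp : W p = (z : ℕ × ℤ) := by
        show (NN q f p, ⌊(q:ℝ)^(NN q f p) * p.1⌋) = (z : ℕ × ℤ)
        rw [h1, h2]
      rw [hWp]
      exact z.2
  have hint : U' ⁻¹' s ∩ W ⁻¹' t = ⋃ z : ↥t, Aev q f (z : ℕ × ℤ).1 (z : ℕ × ℤ).2 s := by
    rw [hWt]
    ext p
    simp only [mem_inter_iff, mem_preimage, mem_iUnion]
    constructor
    · rintro ⟨h1, z, h2, h3⟩
      refine ⟨z, h2, h3, ?_⟩
      show Int.fract ((q:ℝ)^(z : ℕ × ℤ).1 * p.1) ∈ s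
      rw [← h2]
      exact h1
    · rintro ⟨z, h1, h2, h3⟩
      refine ⟨?_, z, h1, h2⟩
      show Int.fract ((q:ℝ)^(NN q f p) * p.1) ∈ s
      rw [h1]
      exact h3
  have hdisjP : Pairwise (Function.onFun Disjoint
      fun z : ↥t => Pev q f (z : ℕ × ℤ).1 (z : ℕ × ℤ).2) := by
    intro z z' hne
    exact Pev_disj (Subtype.coe_injective.ne hne)
  have hdisjA : Pairwise (Function.onFun Disjoint
      fun z : ↥t => Aev q f (z : ℕ × ℤ).1 (z : ℕ × ℤ).2 s) := by
    intro z z' hne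
    exact Disjoint.mono (Aev_subset_Pev _ _ _) (Aev_subset_Pev _ _ _)
      (Pev_disj (Subtype.coe_injective.ne hne))
  rw [hint, hWt, measure_iUnion hdisjA (fun z => Aev_meas hf_meas _ _ hs),
    measure_iUnion hdisjP (fun z => Pev_meas hf_meas _ _)]
  have hterm : ∀ z : ↥t, ℙ (Aev q f (z : ℕ × ℤ).1 (z : ℕ × ℤ).2 s)
      = volume (s ∩ Set.Ico (0:ℝ) 1) * ℙ (Pev q f (z : ℕ × ℤ).1 (z : ℕ × ℤ).2) :=
    fun z => master hq hf_meas hf0 hf_supp hgood_ae _ _ hs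
  rw [tsum_congr hterm, ENNReal.tsum_mul_left]
  have hU : ℙ (U' ⁻¹' s) = volume (s ∩ Set.Ico (0:ℝ) 1) :=
    lawU hq hf_meas hf0 hf_supp hf_pdf hgood_ae hs
  rw [hU]

end final
theorem stmt4
    (q : ℕ) (hq : 2 ≤ q)
    (f : ℝ → ℝ) (hf_meas : Measurable f) (hf_nonneg : ∀ x, 0 ≤ f x)
    (hf_supp : ∀ x, x ∉ Set.Ico (0:ℝ) 1 → f x = 0)
    (hf_pdf : ∫ x in Set.Ico (0:ℝ) 1, f x = 1)
    -- `f` is lower semi-continuous at Lebesgue-almost every point of `[0,1)`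
    (hf_lsc : ∀ᵐ x ∂(volume : Measure ℝ),
      x ∈ Set.Ico (0:ℝ) 1 → LowerSemicontinuousAt f x) :
    ∃ (Ω : Type) (_ : MeasurableSpace Ω) (ℙ : Measure Ω) (_ : IsProbabilityMeasure ℙ)
      (Y : Ω → ℝ) (N : Ω → ℕ),
      Measurable Y ∧ Measurable N ∧
      -- the law of `Y` has density `f`
      Measure.map Y ℙ = volume.withDensity (fun x => ENNReal.ofReal (f x)) ∧
      -- `T^N(Y)` is uniformly distributed on `[0,1)`
      Measure.map (fun ω => (T q)^[N ω] (Y ω)) ℙ = volume.restrict (Set.Ico (0:ℝ) 1) ∧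
      -- `T^N(Y)` is independent of `(N, ⌊q^N Y⌋)`
      ProbabilityTheory.IndepFun (fun ω => (T q)^[N ω] (Y ω))
        (fun ω => (N ω, ⌊(q : ℝ) ^ (N ω) * Y ω⌋)) ℙ ∧
      -- the distribution of `N`
      ∀ n : ℕ, (ℙ {ω | N ω ≤ n}).toReal
        = (q : ℝ) ^ (-(n : ℤ)) * ∑ k ∈ Finset.Icc 1 (q ^ n), sInf (f '' Ikn q n k) := by
  have hgood_ae : ∀ᵐ x ∂(volume : Measure ℝ),
      0 < f x → ∀ v ∈ Set.Ico (0:ℝ) 1, ∃ m, v * f x ≤ gfl q f m x := by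
    filter_upwards [hf_lsc] with x hx hfx v hv
    by_cases hxI : x ∈ Set.Ico (0:ℝ) 1
    · exact good_of_lsc hq hf_nonneg (hx hxI) v hv
    · rw [hf_supp x hxI] at hfx; exact absurd hfx (lt_irrefl 0)
  set μ1 := volume.withDensity fun x => ENNReal.ofReal (f x) with hμ1
  set ν := volume.restrict (Set.Ico (0:ℝ) 1) with hν
  haveI hν_prob : IsProbabilityMeasure ν :=
    ⟨by rw [hν, Measure.restrict_apply_univ, Real.volume_Ico]; norm_num⟩
  haveI hμ1_prob : IsProbabilityMeasure μ1 :=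
    ⟨mu1_univ hf_meas hf_nonneg hf_supp hf_pdf⟩
  have haeY : ∀ᵐ p ∂(μ1.prod ν), p.1 ∈ Set.Ico (0:ℝ) 1 := by
    rw [ae_iff]
    exact fst_null (mu1_I01c hf_supp)
  have haeU : (fun p : ℝ × ℝ => (T q)^[NN q f p] p.1)
      =ᵐ[μ1.prod ν] (fun p => Int.fract ((q:ℝ)^(NN q f p) * p.1)) := by
    filter_upwards [haeY] with p hp
    exact T_iter_eq q hp _
  refine ⟨ℝ × ℝ, inferInstance, μ1.prod ν, inferInstance, Prod.fst, NN q f,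
    measurable_fst, NN_meas hf_meas, ?_, ?_, ?_, ?_⟩
  · rw [Measure.map_fst_prod, measure_univ, one_smul]
  · rw [Measure.map_congr haeU]
    refine Measure.ext fun B hB => ?_
    rw [Measure.map_apply (U'_meas hf_meas) hB, Measure.restrict_apply hB]
    exact lawU hq hf_meas hf_nonneg hf_supp hf_pdf hgood_ae hB
  · exact (indep_main hq hf_meas hf_nonneg hf_supp hf_pdf hgood_ae).congr
      haeU.symm Filter.EventuallyEq.rfl
  · intro n
    have h1 : (μ1.prod ν) {ω : ℝ × ℝ | NN q f ω ≤ n}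
        = ∑ k ∈ Finset.Icc 1 (q^n),
            ENNReal.ofReal (sInf (f '' Ikn q n k)) * ENNReal.ofReal (((q:ℝ)^n)⁻¹) := by
      rw [prob_N_le hq hf_nonneg hgood_ae n, measure_Mset hq hf_meas hf_nonneg hf_supp n]
    rw [h1]
    have hnn : ∀ k, 0 ≤ sInf (f '' Ikn q n k) := by
      intro k
      apply Real.sInf_nonneg
      rintro y ⟨x, _, rfl⟩
      exact hf_nonneg x
    have hinv0 : (0:ℝ) ≤ ((q:ℝ)^n)⁻¹ := inv_nonneg.2 (qnpos hq n).le
    rw [ENNReal.toReal_sum (fun a _ => by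
      exact ENNReal.mul_ne_top ENNReal.ofReal_ne_top ENNReal.ofReal_ne_top)]
    have hterm : ∀ k ∈ Finset.Icc 1 (q^n),
        (ENNReal.ofReal (sInf (f '' Ikn q n k)) * ENNReal.ofReal (((q:ℝ)^n)⁻¹)).toReal
        = ((q:ℝ)^n)⁻¹ * sInf (f '' Ikn q n k) := by
      intro k _
      rw [ENNReal.toReal_mul, ENNReal.toReal_ofReal (hnn k), ENNReal.toReal_ofReal hinv0]
      ring
    rw [Finset.sum_congr rfl hterm, ← Finset.mul_sum]
    congr 1
    rw [zpow_neg, zpow_natCast]
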